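/- Let M₂ be a real symmetric n×n matrix with non-positive off-diagonal entries, D a diagonal n×n matrix with positive diagonal entries, and M₁ = D M₂ D^{−1}. Then for every t ≥ 0 the matrix e^{−M₁ t} has non-negative entries; and if additionally M₁ᵀ𝟙 ≥ 0 entrywise (𝟙 denoting the vector with all entries 1), then ‖e^{−M₁ t} f‖₁ ≤ ‖f‖₁ for every f ∈ ℂ^n and every t ≥ 0. -/

import Mathlib

open scoped Matrix
open NormedSpace

attribute [local instance] Matrix.linftyOpNormedAddCommGroup Matrix.linftyOpNormedRing
  Matrix.linftyOpNormedAlgebra Matrix.instCompleteSpace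

namespace Stmt16Aux

variable {n : ℕ}

lemma pow_entry_nonneg (N : Matrix (Fin n) (Fin n) ℝ) (hN : ∀ i j, 0 ≤ N i j) :
    ∀ (k : ℕ) (i j : Fin n), 0 ≤ (N ^ k) i j := by
  intro k
  induction k with
  | zero => intro i j; simp [Matrix.one_apply]; positivity
  | succ k ih =>
    intro i j
    rw [pow_succ, Matrix.mul_apply]
    exact Finset.sum_nonneg fun l _ => mul_nonneg (ih i l) (hN l j)

lemma pow_colsum_le (N : Matrix (Fin n) (Fin n) ℝ) (hN : ∀ i j, 0 ≤ N i j)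
    (c : ℝ) (hc : 0 ≤ c) (hcol : ∀ j, ∑ i, N i j ≤ c) :
    ∀ (k : ℕ) (j : Fin n), ∑ i, (N ^ k) i j ≤ c ^ k := by
  intro k
  induction k with
  | zero =>
    intro j
    simp [Matrix.one_apply]
  | succ k ih =>
    intro j
    calc ∑ i, (N ^ (k + 1)) i j = ∑ l, (∑ i, N i l) * (N ^ k) l j := by
          rw [pow_succ']
          simp only [Matrix.mul_apply]
          rw [Finset.sum_comm]
          simp [Finset.sum_mul]
      _ ≤ ∑ l, c * (N ^ k) l j :=
          Finset.sum_le_sum fun l _ =>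
            mul_le_mul_of_nonneg_right (hcol l) (pow_entry_nonneg N hN k l j)
      _ = c * ∑ l, (N ^ k) l j := by rw [Finset.mul_sum]
      _ ≤ c * c ^ k := mul_le_mul_of_nonneg_left (ih j) hc
      _ = c ^ (k + 1) := (pow_succ' c k).symm

lemma exp_entry_eq (N : Matrix (Fin n) (Fin n) ℝ) (i j : Fin n) :
    exp N i j = ∑' k : ℕ, ((k.factorial : ℝ)⁻¹ • N ^ k) i j := by
  have hs : Summable fun k : ℕ => (k.factorial : ℝ)⁻¹ • N ^ k :=
    expSeries_summable' N
  have h1 : Summable ((fun k : ℕ => (k.factorial : ℝ)⁻¹ • N ^ k) :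
      ℕ → Fin n → Fin n → ℝ) := hs
  have h2 : Summable fun k : ℕ => ((k.factorial : ℝ)⁻¹ • N ^ k) i := Pi.summable.mp h1 i
  have e0 : exp N = ∑' k : ℕ, (k.factorial : ℝ)⁻¹ • N ^ k := by rw [exp_eq_tsum ℝ]
  have e1 : (∑' k : ℕ, (k.factorial : ℝ)⁻¹ • N ^ k) i
      = ∑' k : ℕ, ((k.factorial : ℝ)⁻¹ • N ^ k) i := tsum_apply h1
  rw [e0, e1, tsum_apply h2]

lemma entry_summable (N : Matrix (Fin n) (Fin n) ℝ) (i j : Fin n) :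
    Summable fun k : ℕ => ((k.factorial : ℝ)⁻¹ • N ^ k) i j := by
  have hs : Summable fun k : ℕ => (k.factorial : ℝ)⁻¹ • N ^ k :=
    expSeries_summable' N
  have h1 : Summable ((fun k : ℕ => (k.factorial : ℝ)⁻¹ • N ^ k) :
      ℕ → Fin n → Fin n → ℝ) := hs
  exact Pi.summable.mp (Pi.summable.mp h1 i) j

lemma exp_nonneg_of_nonneg (N : Matrix (Fin n) (Fin n) ℝ) (hN : ∀ i j, 0 ≤ N i j)
    (i j : Fin n) : 0 ≤ exp N i j := by
  rw [exp_entry_eq]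
  refine tsum_nonneg fun k => ?_
  simp only [Matrix.smul_apply, smul_eq_mul]
  exact mul_nonneg (by positivity) (pow_entry_nonneg N hN k i j)

lemma exp_colsum_le (N : Matrix (Fin n) (Fin n) ℝ) (hN : ∀ i j, 0 ≤ N i j)
    (c : ℝ) (hc : 0 ≤ c) (hcol : ∀ j, ∑ i, N i j ≤ c) (j : Fin n) :
    ∑ i, exp N i j ≤ Real.exp c := by
  have key : ∑ i, exp N i j = ∑' k : ℕ, ∑ i, ((k.factorial : ℝ)⁻¹ • N ^ k) i j := by
    simp_rw [exp_entry_eq]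
    exact (Summable.tsum_finsetSum fun i _ => entry_summable N i j).symm
  rw [key]
  have hexp : Real.exp c = ∑' k : ℕ, (k.factorial : ℝ)⁻¹ • c ^ k := by
    rw [Real.exp_eq_exp_ℝ, exp_eq_tsum ℝ]
  rw [hexp]
  refine Summable.tsum_le_tsum (fun k => ?_) (Summable.of_nonneg_of_le (fun k => ?_) (fun k => ?_)
    (expSeries_summable' (𝕂 := ℝ) c)) (expSeries_summable' (𝕂 := ℝ) c)
  · simp only [Matrix.smul_apply, smul_eq_mul, ← Finset.mul_sum]
    exact mul_le_mul_of_nonneg_left (pow_colsum_le N hN c hc hcol k j) (by positivity)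
  · exact Finset.sum_nonneg fun i _ => by
      simp only [Matrix.smul_apply, smul_eq_mul]
      exact mul_nonneg (by positivity) (pow_entry_nonneg N hN k i j)
  · simp only [Matrix.smul_apply, smul_eq_mul, ← Finset.mul_sum]
    exact mul_le_mul_of_nonneg_left (pow_colsum_le N hN c hc hcol k j) (by positivity)

lemma exp_smul_one (c : ℝ) :
    exp (c • (1 : Matrix (Fin n) (Fin n) ℝ)) = Real.exp c • 1 := by
  have : c • (1 : Matrix (Fin n) (Fin n) ℝ) = Matrix.diagonal (fun _ => c) := by
    ext i j
    by_cases h : i = j <;> simp [Matrix.one_apply, Matrix.diagonal_apply, h]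
  rw [this, Matrix.exp_diagonal]
  ext i j
  by_cases h : i = j <;>
    simp [Matrix.diagonal_apply, Matrix.one_apply, h, Pi.coe_exp, Real.exp_eq_exp_ℝ]

/-- Decomposition: `exp B = Real.exp (-c) • exp (B + c • 1)`. -/
lemma exp_decomp (B : Matrix (Fin n) (Fin n) ℝ) (c : ℝ) :
    exp B = Real.exp (-c) • exp (B + c • 1) := by
  have hcomm : Commute (B + c • 1) ((-c) • (1 : Matrix (Fin n) (Fin n) ℝ)) :=
    (Commute.one_right _).smul_right _
  have : B = (B + c • 1) + (-c) • 1 := by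
    rw [add_assoc, ← add_smul]; simp
  conv_lhs => rw [this]
  rw [Matrix.exp_add_of_commute (B + c • 1) ((-c) • 1) hcomm, exp_smul_one]
  rw [Matrix.mul_smul, Matrix.mul_one]

lemma B_nonneg_offdiag_main (B : Matrix (Fin n) (Fin n) ℝ)
    (hoff : ∀ i j, i ≠ j → 0 ≤ B i j) :
    let c := ∑ i, |B i i|
    (∀ i j, 0 ≤ (B + c • 1) i j) ∧ 0 ≤ c := by
  intro c
  have hc : 0 ≤ c := Finset.sum_nonneg fun i _ => abs_nonneg _
  refine ⟨fun i j => ?_, hc⟩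
  by_cases h : i = j
  · subst h
    simp only [Matrix.add_apply, Matrix.smul_apply, Matrix.one_apply_eq, smul_eq_mul, mul_one]
    have h1 : |B i i| ≤ c := Finset.single_le_sum (f := fun i => |B i i|)
      (fun i _ => abs_nonneg _) (Finset.mem_univ i)
    have := neg_abs_le (B i i)
    linarith
  · simp only [Matrix.add_apply, Matrix.smul_apply, Matrix.one_apply_ne h, smul_eq_mul, mul_zero,
      add_zero]
    exact hoff i j h

lemma exp_nonneg_of_offdiag (B : Matrix (Fin n) (Fin n) ℝ)
    (hoff : ∀ i j, i ≠ j → 0 ≤ B i j) (i j : Fin n) : 0 ≤ exp B i j := by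
  obtain ⟨hN, hc⟩ := B_nonneg_offdiag_main B hoff
  rw [exp_decomp B (∑ i, |B i i|)]
  simp only [Matrix.smul_apply, smul_eq_mul]
  exact mul_nonneg (Real.exp_nonneg _) (exp_nonneg_of_nonneg _ hN i j)

lemma exp_colsum_le_one (B : Matrix (Fin n) (Fin n) ℝ)
    (hoff : ∀ i j, i ≠ j → 0 ≤ B i j) (hcol : ∀ j, ∑ i, B i j ≤ 0) (j : Fin n) :
    ∑ i, exp B i j ≤ 1 := by
  obtain ⟨hN, hc⟩ := B_nonneg_offdiag_main B hoff
  set c := ∑ i, |B i i| with hcdef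
  have hcolN : ∀ j, ∑ i, (B + c • 1) i j ≤ c := by
    intro j
    simp only [Matrix.add_apply, Matrix.smul_apply, smul_eq_mul, Finset.sum_add_distrib]
    have : ∑ i, c * (1 : Matrix (Fin n) (Fin n) ℝ) i j = c := by
      simp [Matrix.one_apply, Finset.mul_sum]
    rw [this]
    linarith [hcol j]
  rw [exp_decomp B c]
  simp only [Matrix.smul_apply, smul_eq_mul, ← Finset.mul_sum]
  calc Real.exp (-c) * ∑ i, exp (B + c • 1) i j
      ≤ Real.exp (-c) * Real.exp c :=
        mul_le_mul_of_nonneg_left (exp_colsum_le _ hN c hc hcolN j) (Real.exp_nonneg _)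
    _ = 1 := by rw [← Real.exp_add]; simp

end Stmt16Aux

/-- Let `M₂` be a real symmetric `n×n` matrix with non-positive
off-diagonal entries, `D = diagonal d` with `d > 0`, and `M₁ = D M₂ D⁻¹`.  Then
`e^{−M₁ t}` has non-negative entries for all `t ≥ 0`; and if moreover `M₁ᵀ 𝟙 ≥ 0`
entrywise, then `e^{−M₁ t}` is an `l¹` contraction on `ℂⁿ`. -/
theorem stmt_16 {n : ℕ}
    (M₂ : Matrix (Fin n) (Fin n) ℝ) (hsym : M₂.IsSymm)
    (hoff : ∀ i j : Fin n, i ≠ j → M₂ i j ≤ 0)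
    (d : Fin n → ℝ) (hd : ∀ i, 0 < d i)
    (M₁ : Matrix (Fin n) (Fin n) ℝ)
    (hM₁ : M₁ = Matrix.diagonal d * M₂ * (Matrix.diagonal d)⁻¹) :
    (∀ t : ℝ, 0 ≤ t → ∀ i j : Fin n, 0 ≤ NormedSpace.exp ((-t) • M₁) i j) ∧
    ((∀ j : Fin n, 0 ≤ ∑ i : Fin n, M₁ i j) →
      ∀ t : ℝ, 0 ≤ t → ∀ f : Fin n → ℂ,
        ∑ i : Fin n,
            ‖((((NormedSpace.exp ((-t) • M₁)).map
              (fun x : ℝ => (x : ℂ))) *ᵥ f) i)‖ ≤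
          ∑ i : Fin n, ‖f i‖) := by
  have hdinv : (Matrix.diagonal d)⁻¹ = Matrix.diagonal (fun i => (d i)⁻¹) := by
    refine Matrix.inv_eq_right_inv ?_
    rw [Matrix.diagonal_mul_diagonal]
    have : (fun i => d i * (d i)⁻¹) = fun _ => (1:ℝ) := by
      funext i; exact mul_inv_cancel₀ (hd i).ne'
    rw [this, Matrix.diagonal_one]
  have hentry : ∀ i j, M₁ i j = d i * M₂ i j * (d j)⁻¹ := by
    intro i j
    rw [hM₁, hdinv, Matrix.mul_diagonal, Matrix.diagonal_mul]
  have hoffB : ∀ t : ℝ, 0 ≤ t → ∀ i j : Fin n, i ≠ j → 0 ≤ ((-t) • M₁) i j := by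
    intro t ht i j hij
    simp only [Matrix.smul_apply, smul_eq_mul, hentry]
    have h2 : M₂ i j ≤ 0 := hoff i j hij
    have h3 : (0:ℝ) < d i := hd i
    have h4 : (0:ℝ) < (d j)⁻¹ := by have := hd j; positivity
    have h1 : d i * M₂ i j * (d j)⁻¹ ≤ 0 :=
      mul_nonpos_of_nonpos_of_nonneg (mul_nonpos_of_nonneg_of_nonpos h3.le h2) h4.le
    nlinarith [mul_nonneg ht (neg_nonneg.mpr h1)]
  constructor
  · intro t ht i j
    exact Stmt16Aux.exp_nonneg_of_offdiag _ (hoffB t ht) i j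
  · intro hcolM t ht f
    have hcolB : ∀ j, ∑ i, ((-t) • M₁) i j ≤ 0 := by
      intro j
      simp only [Matrix.smul_apply, smul_eq_mul, ← Finset.mul_sum]
      exact mul_nonpos_of_nonpos_of_nonneg (by linarith) (hcolM j)
    set E := NormedSpace.exp ((-t) • M₁) with hE
    have hEnn : ∀ i j, 0 ≤ E i j := fun i j =>
      Stmt16Aux.exp_nonneg_of_offdiag _ (hoffB t ht) i j
    have hEcol : ∀ j, ∑ i, E i j ≤ 1 := fun j =>
      Stmt16Aux.exp_colsum_le_one _ (hoffB t ht) hcolB j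
    calc ∑ i, ‖((E.map (fun x : ℝ => (x : ℂ)) *ᵥ f) i)‖
        ≤ ∑ i, ∑ j, E i j * ‖f j‖ := by
          refine Finset.sum_le_sum fun i _ => ?_
          rw [Matrix.mulVec, dotProduct]
          refine (norm_sum_le _ _).trans ?_
          refine Finset.sum_le_sum fun j _ => ?_
          simp only [Matrix.map_apply, norm_mul, Complex.norm_real, Real.norm_eq_abs,
            abs_of_nonneg (hEnn i j), le_refl]
      _ = ∑ j, (∑ i, E i j) * ‖f j‖ := by
          rw [Finset.sum_comm]
          simp [Finset.sum_mul]
      _ ≤ ∑ j, 1 * ‖f j‖ := by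
          refine Finset.sum_le_sum fun j _ => ?_
          exact mul_le_mul_of_nonneg_right (hEcol j) (norm_nonneg _)
      _ = ∑ j, ‖f j‖ := by simp
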